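/- arXiv:math/0308025 — 3 statements merged into one kernel-verified Lean document; each statement's English description precedes it below -/
import Mathlib

section
/- Suppose δ_k > 1 (i.e., a_k > r_k) for all k ∈ ℕ. Then the distribution of φ = Σ_{k=1}^∞ φ_k a_k is purely discrete (i.e., there is a countable set of full measure) if and only if the infinite product Π_{k=1}^∞ max{p_{0k}, p_{1k}} is strictly positive. -/
set_option maxHeartbeats 1000000

open MeasureTheory

/-- The Bernoulli measure on `Bool` giving mass `p₀` to `false` (value `0`) and
mass `p₁` to `true` (value `1`). -/
noncomputable def bernoulliMeasure (p₀ p₁ : ℝ) : Measure Bool :=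
  ENNReal.ofReal p₀ • Measure.dirac false + ENNReal.ofReal p₁ • Measure.dirac true

/-- `P` is the infinite product of the measures `μ k` on `Bool`: every
finite-dimensional cylinder set gets the product of the coordinate measures. -/
def IsProductMeasure (μ : ℕ → Measure Bool) (P : Measure (ℕ → Bool)) : Prop :=
  ∀ (s : Finset ℕ) (E : ℕ → Set Bool),
    P {ω | ∀ k ∈ s, ω k ∈ E k} = ∏ k ∈ s, μ k (E k)

private lemma sum_lt_aux (a : ℕ → ℝ) (ha : ∀ k, 0 < a k) (hSa : Summable a)
    (k : ℕ) (hgap : ∑' i : ℕ, a (k + 1 + i) < a k) (ω ω' : ℕ → Bool)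
    (hlt : ∀ j < k, ω j = ω' j) (h1 : ω k = true) (h2 : ω' k = false) :
    (∑' j, if ω' j then a j else 0) < ∑' j, if ω j then a j else 0 := by
  set g : (ℕ → Bool) → ℕ → ℝ := fun ω j => if ω j then a j else 0 with hg
  have hgle : ∀ (ω : ℕ → Bool) j, 0 ≤ g ω j ∧ g ω j ≤ a j := by
    intro ω j; dsimp [g]; split <;> constructor <;> simp [(ha j).le, (ha j).le]
  have hS : ∀ ω : ℕ → Bool, Summable (g ω) := fun ω =>
    Summable.of_nonneg_of_le (fun j => (hgle ω j).1) (fun j => (hgle ω j).2) hSa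
  set d : ℕ → ℝ := fun j => g ω j - g ω' j with hd
  have hSd : Summable d := (hS ω).sub (hS ω')
  have htsum : ∑' j, d j = (∑' j, g ω j) - ∑' j, g ω' j := Summable.tsum_sub (hS ω) (hS ω')
  have hsplit : ∑ j ∈ Finset.range (k+1), d j + ∑' i : ℕ, d (i + (k+1)) = ∑' j, d j :=
    Summable.sum_add_tsum_nat_add (k+1) hSd
  have hhead : ∑ j ∈ Finset.range (k+1), d j = a k := by
    rw [Finset.sum_range_succ]
    have : ∀ j ∈ Finset.range k, d j = 0 := by
      intro j hj
      simp only [d, g, hlt j (Finset.mem_range.mp hj), sub_self]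
    rw [Finset.sum_eq_zero this]
    simp [d, g, h1, h2]
  have habs : ∀ j, |d j| ≤ a j := by
    intro j
    have h1 := hgle ω j; have h2 := hgle ω' j
    rw [abs_sub_le_iff]; constructor <;> linarith [h1.1, h1.2, h2.1, h2.2]
  have hSshift : Summable (fun i => a (i + (k+1))) := hSa.comp_injective (fun x y => by omega)
  have htail : |∑' i : ℕ, d (i + (k+1))| ≤ ∑' i : ℕ, a (i + (k+1)) := by
    have hSd' : Summable (fun i => |d (i + (k+1))|) := (hSd.comp_injective (fun x y => by omega)).abs
    calc |∑' i : ℕ, d (i + (k+1))| ≤ ∑' i : ℕ, |d (i + (k+1))| := by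
          have h' : Summable fun i => ‖d (i + (k+1))‖ := by
            simpa only [Real.norm_eq_abs] using hSd'
          simpa only [Real.norm_eq_abs] using norm_tsum_le_tsum_norm h'
      _ ≤ ∑' i : ℕ, a (i + (k+1)) := by
          exact Summable.tsum_le_tsum (fun i => habs _) ((hSd.comp_injective (fun x y => by omega)).abs) hSshift
  have hre : ∑' i : ℕ, a (i + (k+1)) = ∑' i : ℕ, a (k + 1 + i) := by
    apply tsum_congr; intro i; ring_nf
  have : 0 < ∑' j, d j := by
    rw [← hsplit, hhead]
    have := abs_le.mp htail
    rw [hre] at this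
    linarith [this.1]
  linarith [htsum ▸ this]

/-- Suppose `a k > r k` (i.e. `δ k > 1`) for all `k`, where `r k = ∑_{i > k} a i` is the
tail of the positive series `∑ a k = 1`.  The distribution of `φ = ∑ φₖ aₖ` (where the
`φₖ` are independent with `P(φₖ = 0) = p₀ₖ`, `P(φₖ = 1) = p₁ₖ`) is purely discrete
(there is a countable set of full measure) if and only if the infinite product
`∏ max{p₀ₖ, p₁ₖ}` is strictly positive.  Since each factor lies in `[0,1]`, the
infinite product is the infimum of the partial products. -/
theorem distribution_discrete_iff_product_max_pos
    (a : ℕ → ℝ) (ha : ∀ k, 0 < a k) (hsum : ∑' k, a k = 1)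
    (r : ℕ → ℝ) (hr : ∀ k, r k = ∑' i : ℕ, a (k + 1 + i))
    (hδ : ∀ k, r k < a k)
    (p₀ p₁ : ℕ → ℝ) (h₀ : ∀ k, 0 ≤ p₀ k) (h₁ : ∀ k, 0 ≤ p₁ k)
    (hp : ∀ k, p₀ k + p₁ k = 1)
    (P : Measure (ℕ → Bool))
    (hP : IsProductMeasure (fun k => bernoulliMeasure (p₀ k) (p₁ k)) P)
    (μφ : Measure ℝ)
    (hμφ : μφ = Measure.map (fun ω : ℕ → Bool => ∑' k : ℕ, if ω k then a k else 0) P) :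
    (∃ D : Set ℝ, D.Countable ∧ μφ D = 1) ↔
      0 < ⨅ n : ℕ, ∏ k ∈ Finset.range n, max (p₀ k) (p₁ k) := by
  -- Notation
  set f : (ℕ → Bool) → ℝ := fun ω => ∑' k : ℕ, if ω k then a k else 0 with hfdef
  set M : ℕ → ℝ := fun k => max (p₀ k) (p₁ k) with hMdef
  set c : ℕ → ℝ := fun n => ∏ k ∈ Finset.range n, M k with hcdef
  -- Basic facts
  have hSa : Summable a := by
    by_contra h
    rw [tsum_eq_zero_of_not_summable h] at hsum; norm_num at hsum
  have hgap : ∀ k, ∑' i : ℕ, a (k + 1 + i) < a k := fun k => (hr k) ▸ hδ k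
  have hple : ∀ k, p₀ k ≤ 1 ∧ p₁ k ≤ 1 := fun k => by
    constructor <;> nlinarith [hp k, h₀ k, h₁ k]
  have hM0 : ∀ k, 0 < M k := by
    intro k
    rcases lt_or_ge 0 (p₀ k) with h | h
    · exact lt_of_lt_of_le h (le_max_left _ _)
    · have : 0 < p₁ k := by nlinarith [hp k, h₀ k]
      exact lt_of_lt_of_le this (le_max_right _ _)
  have hM1 : ∀ k, M k ≤ 1 := fun k => max_le (hple k).1 (hple k).2
  have hc0 : ∀ n, 0 < c n := fun n => Finset.prod_pos (fun k _ => hM0 k)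
  have hcanti : Antitone c := by
    apply antitone_nat_of_succ_le
    intro n
    have : c (n+1) = c n * M n := Finset.prod_range_succ M n
    rw [this]
    nlinarith [hc0 n, hM0 n, hM1 n]
  have hcbdd : BddBelow (Set.range c) := ⟨0, by rintro x ⟨n, rfl⟩; exact (hc0 n).le⟩
  have hctend : Filter.Tendsto c Filter.atTop (nhds (⨅ n, c n)) :=
    tendsto_atTop_ciInf hcanti hcbdd
  -- f is measurable
  have hfm : Measurable f := by
    apply measurable_of_tendsto_metrizable
      (f := fun n (ω : ℕ → Bool) => ∑ k ∈ Finset.range n, if ω k then a k else 0)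
    · intro n
      apply Finset.measurable_sum
      intro k _
      exact (measurable_of_countable (fun b : Bool => if b then a k else 0)).comp
        (measurable_pi_apply k)
    · rw [tendsto_pi_nhds]
      intro ω
      have hS : Summable (fun k => if ω k then a k else 0) := by
        apply Summable.of_nonneg_of_le (fun k => ?_) (fun k => ?_) hSa
        · split <;> simp [(ha k).le]
        · split <;> simp [(ha k).le]
      exact hS.hasSum.tendsto_sum_nat
  -- f is injective
  have hinj : Function.Injective f := by
    intro ω ω' hEq
    by_contra hne
    have hex : ∃ k, ω k ≠ ω' k := Function.ne_iff.mp hne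
    have hspec : ω (Nat.find hex) ≠ ω' (Nat.find hex) := Nat.find_spec hex
    have hlt : ∀ j < Nat.find hex, ω j = ω' j := fun j hj =>
      not_not.mp (Nat.find_min hex hj)
    set k := Nat.find hex
    cases h1 : ω k <;> cases h2 : ω' k
    · exact hspec (h1.trans h2.symm)
    · have := sum_lt_aux a ha hSa k (hgap k) ω' ω (fun j hj => (hlt j hj).symm) h2 h1
      rw [hfdef] at hEq
      simp only [hEq] at this
      exact lt_irrefl _ this
    · have := sum_lt_aux a ha hSa k (hgap k) ω ω' hlt h1 h2
      rw [hfdef] at hEq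
      simp only [hEq] at this
      exact lt_irrefl _ this
    · exact hspec (h1.trans h2.symm)
  -- P is a probability measure
  have hPuniv : P Set.univ = 1 := by
    have := hP ∅ (fun _ => ∅)
    simpa using this
  -- Bernoulli singleton values
  have hbern : ∀ k (b : Bool),
      bernoulliMeasure (p₀ k) (p₁ k) {b} = ENNReal.ofReal (if b then p₁ k else p₀ k) := by
    intro k b
    cases b <;>
      simp [bernoulliMeasure, Measure.add_apply, Measure.smul_apply, smul_eq_mul,
        Measure.dirac_apply]
  -- Cylinder set measure
  have hcylm : ∀ (s : Finset ℕ) (b : ℕ → Bool),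
      MeasurableSet {ω : ℕ → Bool | ∀ k ∈ s, ω k = b k} := by
    intro s b
    have : {ω : ℕ → Bool | ∀ k ∈ s, ω k = b k}
        = ⋂ k ∈ (s : Set ℕ), (fun ω : ℕ → Bool => ω k) ⁻¹' {b k} := by
      ext ω; simp
    rw [this]
    exact MeasurableSet.biInter (Set.to_countable _)
      (fun k _ => (measurable_pi_apply k) (measurableSet_singleton _))
  have hcyl : ∀ (s : Finset ℕ) (b : ℕ → Bool),
      P {ω : ℕ → Bool | ∀ k ∈ s, ω k = b k}
        = ENNReal.ofReal (∏ k ∈ s, if b k then p₁ k else p₀ k) := by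
    intro s b
    have h := hP s (fun k => {b k})
    simp only [Set.mem_singleton_iff] at h
    rw [h, ENNReal.ofReal_prod_of_nonneg (fun k _ => by split <;> [exact h₁ k; exact h₀ k])]
    exact Finset.prod_congr rfl (fun k _ => (hbern k (b k)))
  -- P of a singleton is at most ofReal (c n) for every n
  have hsingle_le : ∀ (ω : ℕ → Bool) (n : ℕ), P {ω} ≤ ENNReal.ofReal (c n) := by
    intro ω n
    have hsub : {ω} ⊆ {ω' : ℕ → Bool | ∀ k ∈ Finset.range n, ω' k = ω k} := by
      rintro ω' rfl; intro k _; rfl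
    calc P {ω} ≤ P {ω' : ℕ → Bool | ∀ k ∈ Finset.range n, ω' k = ω k} := measure_mono hsub
      _ = ENNReal.ofReal (∏ k ∈ Finset.range n, if ω k then p₁ k else p₀ k) := hcyl _ ω
      _ ≤ ENNReal.ofReal (c n) := by
          apply ENNReal.ofReal_le_ofReal
          apply Finset.prod_le_prod
          · intro k _; split <;> [exact h₁ k; exact h₀ k]
          · intro k _; split <;> [exact le_max_right _ _; exact le_max_left _ _]
  constructor
  · -- discrete → infimum positive
    rintro ⟨D, hDc, hD1⟩
    by_contra hpos
    -- the infimum is 0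
    have hinf0 : ⨅ n, c n = 0 := by
      have h1 : (0:ℝ) ≤ ⨅ n, c n := le_ciInf (fun n => (hc0 n).le)
      have h2 : ¬ (0 < ⨅ n, c n) := hpos
      linarith [lt_or_ge 0 (⨅ n, c n) |>.resolve_left h2 |> le_antisymm h1]
    -- every singleton of P is null
    have hsingle0 : ∀ ω : ℕ → Bool, P {ω} = 0 := by
      intro ω
      have htend : Filter.Tendsto (fun n => ENNReal.ofReal (c n)) Filter.atTop (nhds 0) := by
        have : Filter.Tendsto c Filter.atTop (nhds 0) := hinf0 ▸ hctend
        simpa using ENNReal.tendsto_ofReal this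
      have : P {ω} ≤ 0 := ge_of_tendsto htend (Filter.Eventually.of_forall (hsingle_le ω))
      exact le_antisymm this zero_le
    -- hence the preimage of D is null, contradiction
    have hDm : MeasurableSet D := hDc.measurableSet
    have hpre : μφ D = P (f ⁻¹' D) := by rw [hμφ, Measure.map_apply hfm hDm]
    have hpre0 : P (f ⁻¹' D) = 0 := by
      have hcover : f ⁻¹' D = ⋃ x ∈ D, f ⁻¹' {x} := by
        ext ω; simp
      rw [hcover]
      rw [measure_biUnion_null_iff hDc]
      intro x _
      rcases Set.eq_empty_or_nonempty (f ⁻¹' {x}) with h | ⟨ω, hω⟩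
      · simp [h]
      · have hsub : f ⁻¹' {x} ⊆ {ω} := by
          intro ω' hω'
          have : f ω' = f ω := by
            rw [Set.mem_preimage, Set.mem_singleton_iff] at hω hω'
            rw [hω, hω']
          exact hinj this
        exact le_antisymm ((measure_mono hsub).trans_eq (hsingle0 ω)) zero_le
    rw [hpre, hpre0] at hD1
    norm_num at hD1
  · -- infimum positive → discrete
    intro hpos
    set cinf := ⨅ n, c n with hcinf
    -- choose the maximizing bit
    set b : ℕ → Bool := fun k => decide (p₀ k ≤ p₁ k) with hbdef
    have hMb : ∀ k, (if b k then p₁ k else p₀ k) = M k := by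
      intro k
      by_cases h : p₀ k ≤ p₁ k
      · simp [hbdef, h, hMdef, max_eq_right h]
      · simp [hbdef, h, hMdef, max_eq_left (le_of_not_ge h)]
    -- the sets S n: agree with b from index n on
    set S : ℕ → Set (ℕ → Bool) := fun n => {ω | ∀ k, n ≤ k → ω k = b k} with hSdef
    have hSm : ∀ n, MeasurableSet (S n) := by
      intro n
      have : S n = ⋂ k ∈ {k : ℕ | n ≤ k}, (fun ω : ℕ → Bool => ω k) ⁻¹' {b k} := by
        ext ω; simp [hSdef]
      rw [this]
      exact MeasurableSet.biInter (Set.to_countable _)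
        (fun k _ => (measurable_pi_apply k) (measurableSet_singleton _))
    -- each S n is finite, hence countable
    have hSfin : ∀ n, (S n).Finite := by
      intro n
      apply Set.Finite.of_finite_image (f := fun ω (i : Fin n) => ω i)
        (Set.toFinite _)
      intro ω hω ω' hω' h
      funext k
      rcases lt_or_ge k n with hk | hk
      · exact congrFun h ⟨k, hk⟩
      · rw [hω k hk, hω' k hk]
    -- measure of S n from below
    have hcyl2 : ∀ n m, P {ω : ℕ → Bool | ∀ k ∈ Finset.Ico n m, ω k = b k}
        = ENNReal.ofReal (∏ k ∈ Finset.Ico n m, M k) := by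
      intro n m
      rw [hcyl (Finset.Ico n m) b]
      congr 1
      exact Finset.prod_congr rfl (fun k _ => hMb k)
    have hSinter : ∀ n, S n = ⋂ m, {ω : ℕ → Bool | ∀ k ∈ Finset.Ico n m, ω k = b k} := by
      intro n
      ext ω
      simp only [hSdef, Set.mem_setOf_eq, Set.mem_iInter, Finset.mem_Ico]
      constructor
      · intro h m k hk; exact h k hk.1
      · intro h k hk; exact h (k+1) k ⟨hk, Nat.lt_succ_self k⟩
    have hSle : ∀ n, ENNReal.ofReal (cinf / c n) ≤ P (S n) := by
      intro n
      have hanti : Antitone (fun m => {ω : ℕ → Bool | ∀ k ∈ Finset.Ico n m, ω k = b k}) := by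
        intro m m' hmm ω hω k hk
        exact hω k (Finset.mem_of_subset (Finset.Ico_subset_Ico le_rfl hmm) hk)
      have htendS : Filter.Tendsto
          (fun m => P {ω : ℕ → Bool | ∀ k ∈ Finset.Ico n m, ω k = b k})
          Filter.atTop (nhds (P (S n))) := by
        rw [hSinter n]
        exact tendsto_measure_iInter_atTop
          (fun m => (hcylm (Finset.Ico n m) b).nullMeasurableSet) hanti
          ⟨0, by rw [hcyl2]; exact ENNReal.ofReal_ne_top⟩
      apply ge_of_tendsto htendS
      filter_upwards [Filter.eventually_ge_atTop n] with m hm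
      rw [hcyl2]
      apply ENNReal.ofReal_le_ofReal
      rw [div_le_iff₀ (hc0 n)]
      have hsplit : c n * ∏ k ∈ Finset.Ico n m, M k = c m := by
        rw [hcdef]
        simp only [Finset.range_eq_Ico]
        exact Finset.prod_Ico_consecutive M (Nat.zero_le n) hm
      have : cinf ≤ c m := ciInf_le hcbdd m
      nlinarith [this, hsplit]
    -- the union T of the S n has full measure
    set T : Set (ℕ → Bool) := ⋃ n, S n with hTdef
    have hmono : Monotone S := by
      intro n n' hnn ω hω k hk
      exact hω k (le_trans hnn hk)
    have htendT : Filter.Tendsto (fun n => P (S n)) Filter.atTop (nhds (P T)) :=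
      tendsto_measure_iUnion_atTop hmono
    have hdiv : Filter.Tendsto (fun n => ENNReal.ofReal (cinf / c n)) Filter.atTop
        (nhds 1) := by
      have h1 : Filter.Tendsto (fun n => cinf / c n) Filter.atTop (nhds (cinf / cinf)) :=
        Filter.Tendsto.div tendsto_const_nhds hctend (ne_of_gt hpos)
      have h2 : cinf / cinf = 1 := div_self (ne_of_gt hpos)
      rw [h2] at h1
      simpa using ENNReal.tendsto_ofReal h1
    have hT1 : P T = 1 := by
      have hge : (1 : ENNReal) ≤ P T := by
        apply le_of_tendsto hdiv
        filter_upwards with n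
        exact le_trans (hSle n) (measure_mono (Set.subset_iUnion S n))
      have hle : P T ≤ 1 := by
        calc P T ≤ P Set.univ := measure_mono (Set.subset_univ T)
          _ = 1 := hPuniv
      exact le_antisymm hle hge
    -- the image of T under f works
    refine ⟨f '' T, ?_, ?_⟩
    · exact (Set.countable_iUnion fun n => (hSfin n).countable).image f
    · have hDc : (f '' T).Countable := (Set.countable_iUnion fun n => (hSfin n).countable).image f
      have hDm : MeasurableSet (f '' T) := hDc.measurableSet
      have heq : μφ (f '' T) = P (f ⁻¹' (f '' T)) := by
        rw [hμφ, Measure.map_apply hfm hDm]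
      have hge : (1 : ENNReal) ≤ μφ (f '' T) := by
        rw [heq, ← hT1]
        exact measure_mono (Set.subset_preimage_image f T)
      have hle : μφ (f '' T) ≤ 1 := by
        have : μφ Set.univ = 1 := by
          rw [hμφ, Measure.map_apply hfm MeasurableSet.univ]
          simpa using hPuniv
        calc μφ (f '' T) ≤ μφ Set.univ := measure_mono (Set.subset_univ _)
          _ = 1 := this
      exact le_antisymm hle hge
end

section
/- The distribution of φ = Σ_{k=1}^∞ φ_k a_k is of pure type: it is either purely discrete (there is a countable set of full measure), or purely absolutely continuous with respect to Lebesgue measure on ℝ, or purely singular continuous (mutually singular with Lebesgue measure and with no atoms). -/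
open MeasureTheory

namespace JW

open Filter

/-- The additive morphism sending a finitely supported `ℤ`-vector `q` to `∑ q k • a k`. -/
noncomputable def F (a : ℕ → ℝ) : (ℕ →₀ ℤ) →+ ℝ :=
  Finsupp.liftAddHom fun k => zmultiplesHom ℝ (a k)

lemma F_single (a : ℕ → ℝ) (k : ℕ) : F a (Finsupp.single k 1) = a k := by
  simp [F]

/-- The random variable `φ`. -/
noncomputable def phi (a : ℕ → ℝ) (ω : ℕ → Bool) : ℝ := ∑' k, if ω k then a k else 0

/-- The tail part of `φ` from coordinate `n` on. -/
noncomputable def tail (a : ℕ → ℝ) (n : ℕ) (ω : ℕ → Bool) : ℝ :=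
  ∑' k, if n ≤ k ∧ ω k then a k else 0

lemma summable_ite (a : ℕ → ℝ) (hs : Summable a) (hnn : ∀ k, 0 ≤ a k)
    (p : ℕ → Prop) [DecidablePred p] :
    Summable (fun k => if p k then a k else 0) := by
  refine Summable.of_nonneg_of_le (fun k => ?_) (fun k => ?_) hs <;>
    · by_cases h : p k <;> simp [h, hnn k]

lemma phi_eq (a : ℕ → ℝ) (hs : Summable a) (hnn : ∀ k, 0 ≤ a k) (n : ℕ) (ω : ℕ → Bool) :
    phi a ω = (∑ k ∈ Finset.range n, if ω k then a k else 0) + tail a n ω := by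
  have h1 : Summable (fun k => if k < n ∧ ω k then a k else 0) :=
    summable_ite a hs hnn _
  have h2 : Summable (fun k => if n ≤ k ∧ ω k then a k else 0) :=
    summable_ite a hs hnn _
  have key : ∀ k, (if ω k then a k else 0)
      = (if k < n ∧ ω k then a k else 0) + (if n ≤ k ∧ ω k then a k else 0) := by
    intro k
    rcases lt_or_ge k n with h | h <;> by_cases hω : ω k <;>
      simp [h, hω, not_le.2, not_lt.2]
  have : phi a ω = (∑' k, if k < n ∧ ω k then a k else 0) + tail a n ω := by
    rw [phi, tsum_congr key, Summable.tsum_add h1 h2]; rfl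
  rw [this]
  congr 1
  rw [tsum_eq_sum (s := Finset.range n) (f := fun k => if k < n ∧ ω k then a k else 0)
    (by intro k hk; simp at hk; simp [not_lt.2 hk])]
  refine Finset.sum_congr rfl fun k hk => ?_
  simp only [Finset.mem_range] at hk
  simp [hk]

lemma head_mem (a : ℕ → ℝ) (n : ℕ) (ω : ℕ → Bool) :
    ∃ q : ℕ →₀ ℤ, F a q = ∑ k ∈ Finset.range n, if ω k then a k else 0 := by
  refine ⟨∑ k ∈ Finset.range n, if ω k then Finsupp.single k 1 else 0, ?_⟩
  rw [map_sum]
  refine Finset.sum_congr rfl fun k _ => ?_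
  by_cases h : ω k <;> simp [h, F_single]

lemma measurable_tsum {Ω : Type*} [m : MeasurableSpace Ω] (f : ℕ → Ω → ℝ)
    (hf : ∀ k, Measurable (f k)) (hsum : ∀ ω, Summable fun k => f k ω) :
    Measurable fun ω => ∑' k, f k ω := by
  have h : ∀ ω, Tendsto (fun n => ∑ k ∈ Finset.range n, f k ω) atTop (nhds (∑' k, f k ω)) :=
    fun ω => (hsum ω).hasSum.tendsto_sum_nat
  exact measurable_of_tendsto_metrizable
    (fun n => Finset.measurable_sum _ fun k _ => hf k) (tendsto_pi_nhds.2 h)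

/-- The coordinate σ-algebras. -/
def coordSA : ℕ → MeasurableSpace (ℕ → Bool) := fun k =>
  MeasurableSpace.comap (fun ω => ω k) ⊤

lemma tail_measurable (a : ℕ → ℝ) (hs : Summable a) (hnn : ∀ k, 0 ≤ a k) (n : ℕ) :
    @Measurable _ _ (⨆ k, ⨆ (_ : k ≥ n), coordSA k) _ (tail a n) := by
  refine @measurable_tsum _ (⨆ k, ⨆ (_ : k ≥ n), coordSA k) _ ?_ ?_
  · intro k
    by_cases h : n ≤ k
    · have h1 : coordSA k ≤ ⨆ k, ⨆ (_ : k ≥ n), coordSA k :=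
        le_iSup_of_le k (le_iSup_of_le h le_rfl)
      have h2 : @Measurable _ _ (coordSA k) _
          (fun ω : ℕ → Bool => if n ≤ k ∧ ω k then a k else 0) := by
        have hb : Measurable[⊤] (fun b : Bool => if n ≤ k ∧ b then a k else 0) :=
          measurable_from_top
        have hev : @Measurable _ _ (coordSA k) ⊤ (fun ω : ℕ → Bool => ω k) :=
          measurable_iff_comap_le.mpr le_rfl
        exact hb.comp hev
      exact h2.mono h1 le_rfl
    · have : (fun ω : ℕ → Bool => if n ≤ k ∧ ω k then a k else 0) = fun _ => 0 := by
        funext ω; simp [h]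
      rw [this]; exact measurable_const
  · intro ω
    exact summable_ite a hs hnn _

lemma zero_one (a : ℕ → ℝ) (hs : Summable a) (hnn : ∀ k, 0 ≤ a k)
    (P : Measure (ℕ → Bool)) [IsProbabilityMeasure P]
    (hPcyl : ∀ (s : Finset ℕ) (f : ℕ → Set (ℕ → Bool)),
      (∀ i ∈ s, MeasurableSet[coordSA i] (f i)) →
        P (⋂ i ∈ s, f i) = ∏ i ∈ s, P (f i))
    (B : Set ℝ) (hB : MeasurableSet B)
    (hinv : ∀ (q : ℕ →₀ ℤ) (x : ℝ), x + F a q ∈ B ↔ x ∈ B) :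
    P (phi a ⁻¹' B) = 0 ∨ P (phi a ⁻¹' B) = 1 := by
  have h_le : ∀ k, coordSA k ≤ (inferInstance : MeasurableSpace (ℕ → Bool)) := fun k =>
    measurable_iff_comap_le.mp (measurable_pi_apply k)
  have h_indep : ProbabilityTheory.iIndep coordSA P := by
    rw [ProbabilityTheory.iIndep_iff]
    intro S f hf
    exact hPcyl S f hf
  have htail : MeasurableSet[limsup coordSA atTop] (phi a ⁻¹' B) := by
    rw [limsup_eq_iInf_iSup_of_nat, MeasurableSpace.measurableSet_iInf]
    intro n
    have hEq : phi a ⁻¹' B = tail a n ⁻¹' B := by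
      ext ω
      simp only [Set.mem_preimage]
      obtain ⟨q, hq⟩ := head_mem a n ω
      rw [phi_eq a hs hnn n ω, ← hq, add_comm]
      exact hinv q (tail a n ω)
    rw [hEq]
    exact tail_measurable a hs hnn n hB
  exact ProbabilityTheory.measure_zero_or_one_of_measurableSet_limsup_atTop h_le h_indep htail

end JW

/-- Pure type theorem (Jessen–Wintner): the distribution of `φ = ∑ φₖ aₖ` (where the
`φₖ` are independent with `P(φₖ = 0) = p₀ₖ`, `P(φₖ = 1) = p₁ₖ` and `∑ aₖ = 1`,
`aₖ > 0`) is either purely discrete (there is a countable set of full measure), or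
purely absolutely continuous with respect to Lebesgue measure, or purely singular
continuous (mutually singular with Lebesgue measure and without atoms). -/
theorem distribution_pure_type
    (a : ℕ → ℝ) (ha : ∀ k, 0 < a k) (hsum : ∑' k, a k = 1)
    (p₀ p₁ : ℕ → ℝ) (h₀ : ∀ k, 0 ≤ p₀ k) (h₁ : ∀ k, 0 ≤ p₁ k)
    (hp : ∀ k, p₀ k + p₁ k = 1)
    (P : Measure (ℕ → Bool))
    (hP : IsProductMeasure (fun k => bernoulliMeasure (p₀ k) (p₁ k)) P)
    (μφ : Measure ℝ)
    (hμφ : μφ = Measure.map (fun ω : ℕ → Bool => ∑' k : ℕ, if ω k then a k else 0) P) :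
    (∃ D : Set ℝ, D.Countable ∧ μφ D = 1) ∨
      μφ ≪ volume ∨
      (μφ.MutuallySingular volume ∧ ∀ x : ℝ, μφ {x} = 0) := by
  classical
  have hnn : ∀ k, 0 ≤ a k := fun k => (ha k).le
  have hs : Summable a := by
    by_contra h
    rw [tsum_eq_zero_of_not_summable h] at hsum
    exact zero_ne_one hsum
  -- P is a probability measure
  have hPuniv : P Set.univ = 1 := by
    have := hP ∅ (fun _ => Set.univ)
    simpa using this
  haveI hPprob : IsProbabilityMeasure P := ⟨hPuniv⟩
  -- the cylinder property in the form needed for independence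
  have hPcyl : ∀ (s : Finset ℕ) (f : ℕ → Set (ℕ → Bool)),
      (∀ i ∈ s, MeasurableSet[JW.coordSA i] (f i)) →
        P (⋂ i ∈ s, f i) = ∏ i ∈ s, P (f i) := by
    intro s f hf
    have hE : ∀ i, ∃ E : Set Bool, i ∈ s → (fun ω : ℕ → Bool => ω i) ⁻¹' E = f i := by
      intro i
      by_cases hi : i ∈ s
      · obtain ⟨E, -, hE⟩ := MeasurableSpace.measurableSet_comap.mp (hf i hi)
        exact ⟨E, fun _ => hE⟩
      · exact ⟨Set.univ, fun h => absurd h hi⟩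
    choose E hE using hE
    have h1 : (⋂ i ∈ s, f i) = {ω | ∀ k ∈ s, ω k ∈ E k} := by
      ext ω
      simp only [Set.mem_iInter, Set.mem_setOf_eq]
      exact forall₂_congr fun i hi => by rw [← hE i hi]; rfl
    have h2 : ∀ i, i ∈ s → P (f i) = bernoulliMeasure (p₀ i) (p₁ i) (E i) := by
      intro i hi
      have := hP {i} E
      have hset : {ω : ℕ → Bool | ∀ k ∈ ({i} : Finset ℕ), ω k ∈ E k} = f i := by
        ext ω
        simp only [Finset.mem_singleton, Set.mem_setOf_eq]
        constructor
        · intro h; rw [← hE i hi]; exact h i rfl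
        · intro h k hk; subst hk; rw [← hE k hi] at h; exact h
      rw [hset] at this
      simpa using this
    rw [h1, hP s E]
    refine Finset.prod_congr rfl fun i hi => ?_
    exact (h2 i hi).symm
  -- φ and its measurability
  have hφm : Measurable (JW.phi a) := by
    apply JW.measurable_tsum
    · intro k
      have h1 : Measurable (fun b : Bool => if b then a k else 0) := measurable_of_countable _
      exact h1.comp (measurable_pi_apply k)
    · intro ω
      exact JW.summable_ite a hs hnn _
  have hφeq : (fun ω : ℕ → Bool => ∑' k : ℕ, if ω k then a k else 0) = JW.phi a := rfl
  have hμφ_apply : ∀ B : Set ℝ, MeasurableSet B → μφ B = P (JW.phi a ⁻¹' B) := by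
    intro B hB
    rw [hμφ, hφeq, Measure.map_apply hφm hB]
  haveI hμφ_prob : IsProbabilityMeasure μφ := by
    rw [hμφ, hφeq]
    exact Measure.isProbabilityMeasure_map hφm.aemeasurable
  -- the zero-one law for invariant sets
  have Z : ∀ B : Set ℝ, MeasurableSet B →
      (∀ (q : ℕ →₀ ℤ) (x : ℝ), x + JW.F a q ∈ B ↔ x ∈ B) → μφ B = 0 ∨ μφ B = 1 := by
    intro B hB hi
    rw [hμφ_apply B hB]
    exact JW.zero_one a hs hnn P hPcyl B hB hi
  -- the saturation operator
  let T : Set ℝ → Set ℝ := fun C => ⋃ q : ℕ →₀ ℤ, (fun x => x + JW.F a q) ⁻¹' C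
  have memT : ∀ C x, x ∈ T C ↔ ∃ q, x + JW.F a q ∈ C := by
    intro C x; simp [T]
  have subT : ∀ C, C ⊆ T C := by
    intro C x hx
    exact (memT C x).mpr ⟨0, by simpa using hx⟩
  have invT : ∀ C (q : ℕ →₀ ℤ) (x : ℝ), x + JW.F a q ∈ T C ↔ x ∈ T C := by
    intro C q x
    rw [memT, memT]
    constructor
    · rintro ⟨e, he⟩
      exact ⟨q + e, by rwa [map_add, ← add_assoc]⟩
    · rintro ⟨e, he⟩
      refine ⟨e - q, ?_⟩
      have heq : x + JW.F a q + (JW.F a e - JW.F a q) = x + JW.F a e := by ring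
      rwa [map_sub, heq]
  have measT : ∀ C, MeasurableSet C → MeasurableSet (T C) :=
    fun C hC => MeasurableSet.iUnion fun q => hC.preimage (measurable_add_const _)
  have cntT : ∀ C : Set ℝ, C.Countable → (T C).Countable :=
    fun C hC => Set.countable_iUnion fun q => hC.preimage (add_left_injective _)
  have nullT : ∀ C : Set ℝ, volume C = 0 → volume (T C) = 0 := by
    intro C hC
    refine measure_iUnion_null fun q => ?_
    rw [measure_preimage_add_right]
    exact hC
  -- the atoms
  set A : Set ℝ := {x | μφ {x} ≠ 0} with hA
  have hAc : A.Countable := by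
    have h := Measure.countable_meas_level_set_pos (μ := μφ) (g := (id : ℝ → ℝ)) measurable_id
    refine h.mono ?_
    intro x hx
    simp only [Set.mem_setOf_eq, hA] at hx ⊢
    have hxx : {a : ℝ | id a = x} = {x} := Set.setOf_eq_eq_singleton
    rw [hxx]
    exact pos_iff_ne_zero.mpr hx
  have hTAc : (T A).Countable := cntT A hAc
  rcases Z (T A) hTAc.measurableSet (invT A) with h0 | h1
  · -- no atoms
    have hnoatom : ∀ x : ℝ, μφ {x} = 0 := by
      intro x
      by_contra h
      have hxA : x ∈ T A := subT A h
      have : μφ {x} ≤ μφ (T A) := measure_mono (Set.singleton_subset_iff.mpr hxA)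
      rw [h0] at this
      exact h (le_antisymm this zero_le)
    -- Lebesgue decomposition
    obtain ⟨S, hSm, hσS, hvolSc⟩ := μφ.mutuallySingular_singularPart volume
    set N : Set ℝ := Sᶜ with hN
    have hNm : MeasurableSet N := hSm.compl
    have hNnull : volume N = 0 := hvolSc
    have hTNm : MeasurableSet (T N) := measT N hNm
    have hTNnull : volume (T N) = 0 := nullT N hNnull
    rcases Z (T N) hTNm (invT N) with hz | ho
    · -- absolutely continuous
      refine Or.inr (Or.inl ?_)
      have hσ0 : μφ.singularPart volume = 0 := by
        have h1 : μφ.singularPart volume (T N) = 0 :=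
          le_antisymm (le_trans (Measure.le_iff'.mp (μφ.singularPart_le volume) (T N))
            (le_of_eq hz)) zero_le
        have h2 : μφ.singularPart volume ((T N)ᶜ) = 0 := by
          have hsub : (T N)ᶜ ⊆ S := by
            intro x hx
            by_contra hxS
            exact hx (subT N hxS)
          exact le_antisymm (le_trans (measure_mono hsub) (le_of_eq hσS)) zero_le
        rw [← Measure.measure_univ_eq_zero]
        refine le_antisymm ?_ zero_le
        calc μφ.singularPart volume Set.univ ≤
            μφ.singularPart volume (T N) + μφ.singularPart volume ((T N)ᶜ) := by
              rw [← Set.union_compl_self (T N)]; exact measure_union_le _ _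
          _ = 0 := by rw [h1, h2, add_zero]
      have hdec := μφ.haveLebesgueDecomposition_add volume
      rw [hσ0, zero_add] at hdec
      rw [hdec]
      exact withDensity_absolutelyContinuous volume _
    · -- singular continuous
      refine Or.inr (Or.inr ⟨?_, hnoatom⟩)
      refine ⟨(T N)ᶜ, hTNm.compl, ?_, ?_⟩
      · rwa [prob_compl_eq_zero_iff hTNm]
      · rwa [compl_compl]
  · -- purely discrete
    exact Or.inl ⟨T A, hTAc, h1⟩
end

section
/- Suppose p_{0k} > 0 and p_{1k} > 0 for all k. Then the topological support of the distribution of φ = Σ_{k=1}^∞ φ_k a_k (the smallest closed set of full measure) equals the set S = {Σ_{k=1}^∞ γ_k a_k : γ_k ∈ {0,1} for all k} of all subsums of the series; in particular, S is a closed subset of ℝ. -/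
open MeasureTheory

lemma bernoulliMeasure_singleton_ne_zero {p₀ p₁ : ℝ} (h₀ : 0 < p₀) (h₁ : 0 < p₁)
    (b : Bool) : bernoulliMeasure p₀ p₁ {b} ≠ 0 := by
  cases b <;>
  · simp only [bernoulliMeasure, Measure.add_apply, Measure.smul_apply, smul_eq_mul,
      Measure.dirac_apply]
    simp [ENNReal.ofReal_pos.2 h₀, ENNReal.ofReal_pos.2 h₁, ne_of_gt]

lemma ite_diff_abs_le {c : ℝ} (hc : 0 ≤ c) (b b' : Bool) :
    |(if b then c else 0) - (if b' then c else 0)| ≤ c := by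
  cases b <;> cases b' <;> simp [abs_of_nonneg hc, hc]

set_option maxHeartbeats 1000000 in
/-- If `p₀ₖ > 0` and `p₁ₖ > 0` for all `k`, then the topological support of the
distribution of `φ = ∑ φₖ aₖ` — the smallest closed set of full measure — equals the
set `S` of all subsums of the series `∑ aₖ`; in particular `S` is closed. -/
theorem distribution_support_eq_subsums
    (a : ℕ → ℝ) (ha : ∀ k, 0 < a k) (hsum : ∑' k, a k = 1)
    (p₀ p₁ : ℕ → ℝ) (h₀ : ∀ k, 0 < p₀ k) (h₁ : ∀ k, 0 < p₁ k)
    (hp : ∀ k, p₀ k + p₁ k = 1)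
    (P : Measure (ℕ → Bool))
    (hP : IsProductMeasure (fun k => bernoulliMeasure (p₀ k) (p₁ k)) P)
    (μφ : Measure ℝ)
    (hμφ : μφ = Measure.map (fun ω : ℕ → Bool => ∑' k : ℕ, if ω k then a k else 0) P)
    (S : Set ℝ)
    (hS : S = {x | ∃ γ : ℕ → Bool, x = ∑' k : ℕ, if γ k then a k else 0}) :
    IsClosed S ∧ μφ S = 1 ∧ ∀ F : Set ℝ, IsClosed F → μφ F = 1 → S ⊆ F := by
  have hsummable : Summable a := by
    by_contra h
    rw [tsum_eq_zero_of_not_summable h] at hsum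
    norm_num at hsum
  set f : (ℕ → Bool) → ℝ := fun ω => ∑' k : ℕ, if ω k then a k else 0 with hfdef
  have hbound : ∀ (k : ℕ) (ω : ℕ → Bool), ‖(if ω k then a k else 0 : ℝ)‖ ≤ a k := by
    intro k ω
    rw [Real.norm_eq_abs]
    cases hb : ω k <;> simp [abs_of_nonneg (ha k).le, (ha k).le]
  have hf_cont : Continuous f := by
    apply continuous_tsum _ hsummable hbound
    intro k
    exact (continuous_of_discreteTopology (f := fun b : Bool => if b then a k else 0)).comp
      (continuous_apply k)
  have hf_meas : Measurable f := hf_cont.measurable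
  have hS' : S = Set.range f := by
    rw [hS]; ext x; simp only [Set.mem_setOf_eq, Set.mem_range, hfdef]
    exact ⟨fun ⟨γ, h⟩ => ⟨γ, h.symm⟩, fun ⟨γ, h⟩ => ⟨γ, h.symm⟩⟩
  have hSclosed : IsClosed S := by
    rw [hS']; exact (isCompact_range hf_cont).isClosed
  have hPuniv : P Set.univ = 1 := by
    have := hP ∅ (fun _ => Set.univ)
    simpa using this
  have hμφuniv : μφ Set.univ = 1 := by
    rw [hμφ, Measure.map_apply hf_meas MeasurableSet.univ, Set.preimage_univ, hPuniv]
  have hμφS : μφ S = 1 := by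
    rw [hμφ, Measure.map_apply hf_meas hSclosed.measurableSet]
    have hpre : f ⁻¹' S = Set.univ := by
      ext ω; simp [hS']
    rw [hpre, hPuniv]
  refine ⟨hSclosed, hμφS, ?_⟩
  intro F hF hμF x hxS
  by_contra hxF
  obtain ⟨γ, hγ⟩ : ∃ γ : ℕ → Bool, f γ = x := by
    rw [hS'] at hxS; exact hxS
  -- x is in the open complement of F
  obtain ⟨ε, hε, hball⟩ : ∃ ε > 0, Metric.ball x ε ⊆ Fᶜ :=
    Metric.isOpen_iff.1 hF.isOpen_compl x hxF
  -- choose N with tail sum < ε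
  obtain ⟨N, hN⟩ : ∃ N : ℕ, ∑' i : ℕ, a (i + N) < ε := by
    obtain ⟨N, hN⟩ := Metric.tendsto_atTop.1 (tendsto_sum_nat_add a) ε hε
    refine ⟨N, ?_⟩
    have := hN N le_rfl
    rwa [Real.dist_eq, sub_zero, abs_of_nonneg (tsum_nonneg fun i => (ha _).le)] at this
  -- summability of the coordinate series
  have hsumm : ∀ τ : ℕ → Bool, Summable (fun k : ℕ => if τ k then a k else 0) := by
    intro τ
    refine Summable.of_nonneg_of_le (fun k => ?_) (fun k => ?_) hsummable
    · split <;> simp [(ha k).le]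
    · split <;> simp [(ha k).le]
  have htaila : Summable (fun i : ℕ => a (i + N)) := (summable_nat_add_iff N).2 hsummable
  -- distance bound on the cylinder
  have key : ∀ ω : ℕ → Bool, (∀ k < N, ω k = γ k) → |f ω - f γ| < ε := by
    intro ω hω
    have htailω : Summable (fun i : ℕ => (if ω (i + N) then a (i + N) else 0 : ℝ)) :=
      (summable_nat_add_iff N).2 (hsumm ω)
    have htailγ : Summable (fun i : ℕ => (if γ (i + N) then a (i + N) else 0 : ℝ)) :=
      (summable_nat_add_iff N).2 (hsumm γ)
    have hhead : ∑ k ∈ Finset.range N, (if ω k then a k else 0 : ℝ)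
        = ∑ k ∈ Finset.range N, (if γ k then a k else 0 : ℝ) := by
      refine Finset.sum_congr rfl fun k hk => ?_
      rw [hω k (Finset.mem_range.1 hk)]
    have e1 : (∑ k ∈ Finset.range N, (if ω k then a k else 0 : ℝ))
        + ∑' i : ℕ, (if ω (i + N) then a (i + N) else 0 : ℝ) = f ω :=
      Summable.sum_add_tsum_nat_add N (hsumm ω)
    have e2 : (∑ k ∈ Finset.range N, (if γ k then a k else 0 : ℝ))
        + ∑' i : ℕ, (if γ (i + N) then a (i + N) else 0 : ℝ) = f γ :=
      Summable.sum_add_tsum_nat_add N (hsumm γ)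
    have hdiff : f ω - f γ
        = (∑' i : ℕ, (if ω (i + N) then a (i + N) else 0 : ℝ))
          - ∑' i : ℕ, (if γ (i + N) then a (i + N) else 0 : ℝ) := by
      rw [← e1, ← e2, hhead]; ring
    have hdiff2 : f ω - f γ
        = ∑' i : ℕ, ((if ω (i + N) then a (i + N) else 0 : ℝ)
            - (if γ (i + N) then a (i + N) else 0)) := by
      rw [hdiff, Summable.tsum_sub htailω htailγ]
    have habs : Summable (fun i : ℕ => |((if ω (i + N) then a (i + N) else 0 : ℝ)
        - (if γ (i + N) then a (i + N) else 0))|) := (htailω.sub htailγ).abs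
    have hle1 : |f ω - f γ| ≤ ∑' i : ℕ, |((if ω (i + N) then a (i + N) else 0 : ℝ)
        - (if γ (i + N) then a (i + N) else 0))| := by
      rw [hdiff2]
      simpa [Real.norm_eq_abs] using
        norm_tsum_le_tsum_norm (f := fun i : ℕ => ((if ω (i + N) then a (i + N) else 0 : ℝ)
          - (if γ (i + N) then a (i + N) else 0))) (by simpa [Real.norm_eq_abs] using habs)
    have hle2 : ∑' i : ℕ, |((if ω (i + N) then a (i + N) else 0 : ℝ)
        - (if γ (i + N) then a (i + N) else 0))| ≤ ∑' i : ℕ, a (i + N) :=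
      Summable.tsum_le_tsum (fun i => ite_diff_abs_le (ha (i + N)).le _ _) habs htaila
    exact lt_of_le_of_lt (hle1.trans hle2) hN
  -- the cylinder set
  have hPC : P {ω : ℕ → Bool | ∀ k ∈ Finset.range N, ω k ∈ ({γ k} : Set Bool)}
      = ∏ k ∈ Finset.range N, bernoulliMeasure (p₀ k) (p₁ k) {γ k} :=
    hP (Finset.range N) (fun k => {γ k})
  have hPCpos : 0 < P {ω : ℕ → Bool | ∀ k ∈ Finset.range N, ω k ∈ ({γ k} : Set Bool)} := by
    rw [hPC]
    refine pos_iff_ne_zero.2 (Finset.prod_ne_zero_iff.2 fun k _ => ?_)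
    exact bernoulliMeasure_singleton_ne_zero (h₀ k) (h₁ k) (γ k)
  have hsub : {ω : ℕ → Bool | ∀ k ∈ Finset.range N, ω k ∈ ({γ k} : Set Bool)}
      ⊆ f ⁻¹' Metric.ball x ε := by
    intro ω hω
    have h1 : |f ω - f γ| < ε := key ω fun k hk => by
      have := hω k (Finset.mem_range.2 hk); simpa using this
    simp only [Set.mem_preimage, Metric.mem_ball, Real.dist_eq, ← hγ]
    exact h1
  have hμball : μφ (Metric.ball x ε) = 0 := by
    have hcompl : μφ Fᶜ = 0 := by
      rw [measure_compl hF.measurableSet (by rw [hμF]; exact ENNReal.one_ne_top), hμφuniv, hμF,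
        tsub_self]
    exact measure_mono_null hball hcompl
  have hle : P {ω : ℕ → Bool | ∀ k ∈ Finset.range N, ω k ∈ ({γ k} : Set Bool)}
      ≤ μφ (Metric.ball x ε) := by
    rw [hμφ, Measure.map_apply hf_meas Metric.isOpen_ball.measurableSet]
    exact measure_mono hsub
  rw [hμball] at hle
  exact absurd (le_antisymm hle (zero_le)) (ne_of_gt hPCpos)
end
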